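/- Let θ₁, θ₂ ∈ (0, π/2) with θ₁ ≠ θ₂, and let θ* ∈ (0, π/2) satisfy tan(θ*)² = tan(θ₁)·tan(θ₂). Then cos(θ₁)·cos(θ₂) < cos(θ*)²: for a fixed geometric mean of angular velocities, the similarity retention factor γ = cos(θ₁)cos(θ₂) is strictly smaller in the asymmetric case than in the symmetric (balanced) case. -/

import Mathlib

/-- Asymmetry strictly decreases the retention factor: for `θ₁ ≠ θ₂` in `(0, π/2)`
and `θ*` with the same geometric mean of tangents, `cos θ₁ cos θ₂ < cos² θ*`. -/
theorem retention_lt_of_asymmetric (θ₁ θ₂ θs : ℝ)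
    (h₁ : θ₁ ∈ Set.Ioo 0 (Real.pi / 2)) (h₂ : θ₂ ∈ Set.Ioo 0 (Real.pi / 2))
    (hs : θs ∈ Set.Ioo 0 (Real.pi / 2)) (hne : θ₁ ≠ θ₂)
    (htan : Real.tan θs ^ 2 = Real.tan θ₁ * Real.tan θ₂) :
    Real.cos θ₁ * Real.cos θ₂ < Real.cos θs ^ 2 := by
  obtain ⟨ha1, hb1⟩ := h₁
  obtain ⟨ha2, hb2⟩ := h₂
  obtain ⟨has, hbs⟩ := hs
  have hc1 : 0 < Real.cos θ₁ := Real.cos_pos_of_mem_Ioo ⟨by linarith [Real.pi_pos], hb1⟩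
  have hc2 : 0 < Real.cos θ₂ := Real.cos_pos_of_mem_Ioo ⟨by linarith [Real.pi_pos], hb2⟩
  have hcs : 0 < Real.cos θs := Real.cos_pos_of_mem_Ioo ⟨by linarith [Real.pi_pos], hbs⟩
  have hpos : 0 < 1 + Real.tan θ₁ * Real.tan θ₂ := by
    have t1 : 0 < Real.tan θ₁ := Real.tan_pos_of_pos_of_lt_pi_div_two ha1 hb1
    have t2 : 0 < Real.tan θ₂ := Real.tan_pos_of_pos_of_lt_pi_div_two ha2 hb2
    nlinarith
  have key1 : Real.cos θ₁ * Real.cos θ₂ * (1 + Real.tan θ₁ * Real.tan θ₂)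
      = Real.cos (θ₁ - θ₂) := by
    rw [Real.cos_sub, Real.tan_eq_sin_div_cos, Real.tan_eq_sin_div_cos]
    field_simp
  have key2 : Real.cos θs ^ 2 * (1 + Real.tan θ₁ * Real.tan θ₂) = 1 := by
    rw [← htan, Real.tan_eq_sin_div_cos]
    have := Real.sin_sq_add_cos_sq θs
    field_simp
    linarith
  have hlt : Real.cos (θ₁ - θ₂) < 1 := by
    have hne' : θ₁ - θ₂ ≠ 0 := sub_ne_zero.mpr hne
    have habs : 0 < |θ₁ - θ₂| := abs_pos.mpr hne'
    have habs2 : |θ₁ - θ₂| ≤ Real.pi := by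
      rw [abs_sub_le_iff]; constructor <;> nlinarith [Real.pi_pos]
    calc Real.cos (θ₁ - θ₂) = Real.cos |θ₁ - θ₂| := (Real.cos_abs _).symm
      _ < Real.cos 0 := Real.strictAntiOn_cos ⟨le_refl 0, Real.pi_pos.le⟩
          ⟨abs_nonneg _, habs2⟩ habs
      _ = 1 := Real.cos_zero
  nlinarith [key1, key2, hlt]
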